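/- Let F : 2^V → ℝ≥0 be a monotone submodular function with F(∅) = 0 on a finite set V, and let S* be any subset of V. Let S_i denote the set produced after i steps of the greedy algorithm that starts from ∅ and at each step adds an element with maximal marginal gain. Then for every i ≥ 0 and every k ≥ 1 with |S*| ≤ k, F(S_i) ≥ (1 − e^{−i/k}) F(S*). -/
import Mathlib


open Finset

/-- Greedy guarantee for monotone submodular maximization: after `i` greedy steps,
`F(S_i) ≥ (1 − e^{−i/k}) F(S*)` whenever `|S*| ≤ k`. -/
theorem stmt_3 {ι : Type*} [Fintype ι] [DecidableEq ι]
    (F : Finset ι → ℝ)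
    (hF0 : F ∅ = 0)
    (hmono : ∀ S T : Finset ι, S ⊆ T → F S ≤ F T)
    (hsub : ∀ S T : Finset ι, S ⊆ T → ∀ e, e ∉ T →
      F (insert e T) - F T ≤ F (insert e S) - F S)
    (Sg : ℕ → Finset ι)
    (hSg0 : Sg 0 = ∅)
    (hgreedy : ∀ i : ℕ, ∃ e : ι, Sg (i + 1) = insert e (Sg i) ∧
      ∀ e' : ι, F (insert e' (Sg i)) ≤ F (insert e (Sg i)))
    (Sstar : Finset ι) (k : ℕ) (hk : 1 ≤ k) (hcard : Sstar.card ≤ k) :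
    ∀ i : ℕ, (1 - Real.exp (-(i : ℝ) / (k : ℝ))) * F Sstar ≤ F (Sg i) := by
  have hkR : (1:ℝ) ≤ (k:ℝ) := by exact_mod_cast hk
  have hkpos : (0:ℝ) < (k:ℝ) := lt_of_lt_of_le one_pos hkR
  have hFnn : 0 ≤ F Sstar := hF0 ▸ hmono ∅ Sstar (empty_subset _)
  -- submodular union bound
  have key : ∀ (S T : Finset ι),
      F (S ∪ T) ≤ F S + ∑ e ∈ T, (F (insert e S) - F S) := by
    intro S T
    induction T using Finset.induction_on with
    | empty => simp
    | @insert a T ha ih =>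
      rw [Finset.sum_insert ha]
      have hU : S ∪ insert a T = insert a (S ∪ T) := by
        ext x; simp [or_comm, or_assoc, or_left_comm]
      rw [hU]
      by_cases haST : a ∈ S ∪ T
      · rw [Finset.insert_eq_self.2 haST]
        have h0 : 0 ≤ F (insert a S) - F S :=
          sub_nonneg.2 (hmono _ _ (Finset.subset_insert _ _))
        linarith
      · have := hsub S (S ∪ T) Finset.subset_union_left a haST
        linarith
  -- one-step gap bound
  have step : ∀ i : ℕ,
      F Sstar - F (Sg i) ≤ (k:ℝ) * (F (Sg (i+1)) - F (Sg i)) := by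
    intro i
    obtain ⟨e, he1, he2⟩ := hgreedy i
    have hg0 : 0 ≤ F (Sg (i+1)) - F (Sg i) := by
      rw [he1]; exact sub_nonneg.2 (hmono _ _ (Finset.subset_insert _ _))
    have h1 : F Sstar ≤ F (Sg i ∪ Sstar) :=
      hmono _ _ Finset.subset_union_right
    have h2 := key (Sg i) Sstar
    have h3 : ∑ e' ∈ Sstar, (F (insert e' (Sg i)) - F (Sg i))
        ≤ (Sstar.card : ℝ) * (F (Sg (i+1)) - F (Sg i)) := by
      calc ∑ e' ∈ Sstar, (F (insert e' (Sg i)) - F (Sg i))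
          ≤ ∑ _e' ∈ Sstar, (F (Sg (i+1)) - F (Sg i)) := by
            apply Finset.sum_le_sum
            intro e' _
            have := he2 e'
            rw [he1]; linarith
        _ = (Sstar.card : ℝ) * (F (Sg (i+1)) - F (Sg i)) := by
            rw [Finset.sum_const, nsmul_eq_mul]
    have h4 : (Sstar.card : ℝ) * (F (Sg (i+1)) - F (Sg i))
        ≤ (k:ℝ) * (F (Sg (i+1)) - F (Sg i)) := by
      apply mul_le_mul_of_nonneg_right _ hg0
      exact_mod_cast hcard
    linarith
  -- geometric decay
  have main : ∀ i : ℕ,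
      F Sstar - F (Sg i) ≤ (1 - 1/(k:ℝ))^i * F Sstar := by
    intro i
    induction i with
    | zero => simp [hSg0, hF0]
    | succ i ih =>
      have hs := step i
      have hdiv : (F Sstar - F (Sg i))/(k:ℝ) ≤ F (Sg (i+1)) - F (Sg i) :=
        (div_le_iff₀ hkpos).2 (by linarith [hs])
      have heq : (1 - 1/(k:ℝ)) * (F Sstar - F (Sg i))
          = (F Sstar - F (Sg i)) - (F Sstar - F (Sg i))/(k:ℝ) := by ring
      have hstep : F Sstar - F (Sg (i+1)) ≤ (1 - 1/(k:ℝ)) * (F Sstar - F (Sg i)) := by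
        rw [heq]; linarith
      have hcoef : 0 ≤ 1 - 1/(k:ℝ) := by
        have : 1/(k:ℝ) ≤ 1 := by
          rw [div_le_one hkpos]; exact hkR
        linarith
      calc F Sstar - F (Sg (i+1)) ≤ (1 - 1/(k:ℝ)) * (F Sstar - F (Sg i)) := hstep
        _ ≤ (1 - 1/(k:ℝ)) * ((1 - 1/(k:ℝ))^i * F Sstar) :=
            mul_le_mul_of_nonneg_left ih hcoef
        _ = (1 - 1/(k:ℝ))^(i+1) * F Sstar := by ring
  intro i
  have hcoef : 0 ≤ 1 - 1/(k:ℝ) := by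
    have : 1/(k:ℝ) ≤ 1 := by rw [div_le_one hkpos]; exact hkR
    linarith
  have hexp1 : 1 - 1/(k:ℝ) ≤ Real.exp (-(1/(k:ℝ))) := by
    have := Real.add_one_le_exp (-(1/(k:ℝ)))
    linarith
  have hpow : (1 - 1/(k:ℝ))^i ≤ Real.exp (-(i:ℝ)/(k:ℝ)) := by
    calc (1 - 1/(k:ℝ))^i ≤ (Real.exp (-(1/(k:ℝ))))^i :=
          pow_le_pow_left₀ hcoef hexp1 i
      _ = Real.exp ((i:ℝ) * (-(1/(k:ℝ)))) := (Real.exp_nat_mul _ i).symm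
      _ = Real.exp (-(i:ℝ)/(k:ℝ)) := by ring_nf
  have := main i
  have h5 : (1 - 1/(k:ℝ))^i * F Sstar ≤ Real.exp (-(i:ℝ)/(k:ℝ)) * F Sstar :=
    mul_le_mul_of_nonneg_right hpow hFnn
  nlinarith
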